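/- Let Q(ζ, s) = (ζ − ζ₀)^m + Σ_{k=1}^m a_k(s)(ζ − ζ₀)^{m−k} be a monic polynomial in ζ of degree m ≥ 1 whose coefficients a_k(s) are continuous in s with a_k(0) = 0. Suppose the roots ζ_1(s), …, ζ_m(s) satisfy: for each j, either ζ_j(s) = ζ_1(s) identically, or |ζ_j(s) − ζ_1(s)| ≥ c |s|^{ν₁} for small |s|, with c > 0, ν₁ > 0. Then there exist ν > 0, c₁ > 0, c₂ > 0 and μ > ν such that |Q(ζ, s)| ≥ c₂ |s|^{μ} whenever |ζ − ζ_1(s)| = c₁ |s|^{ν} and |s| is sufficiently small. -/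

import Mathlib

open Complex

/-- Lower bound for a monic polynomial `Q(ζ,s) = (ζ-ζ₀)^m + ∑ a_k(s)(ζ-ζ₀)^{m-k}` on a small
circle around one of its roots `ζ_1(s)`, given Puiseux-type separation of the other roots. -/
theorem stmt_4 (m : ℕ) (hm : 1 ≤ m) (ζ₀ : ℂ)
    (a : Fin m → ℝ → ℂ) (hacont : ∀ k, Continuous (a k)) (ha0 : ∀ k, a k 0 = 0)
    (z : Fin m → ℝ → ℂ)
    -- Q factors through its roots:
    (hfact : ∀ (ζ : ℂ) (s : ℝ),
      (ζ - ζ₀) ^ m + ∑ k : Fin m, a k s * (ζ - ζ₀) ^ (m - (k.1 + 1)) =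
        ∏ j : Fin m, (ζ - z j s))
    -- separation of the roots from the chosen root `z 0`:
    (c ν₁ s₀ : ℝ) (hc : 0 < c) (hν₁ : 0 < ν₁) (hs₀ : 0 < s₀)
    (hsep : ∀ j : Fin m,
      (∀ s : ℝ, |s| < s₀ → z j s = z ⟨0, hm⟩ s) ∨
      (∀ s : ℝ, 0 < |s| → |s| < s₀ → c * |s| ^ ν₁ ≤ ‖z j s - z ⟨0, hm⟩ s‖)) :
    ∃ ν > (0:ℝ), ∃ c₁ > (0:ℝ), ∃ c₂ > (0:ℝ), ∃ μ > ν, ∃ s₁ > (0:ℝ),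
      ∀ (s : ℝ) (ζ : ℂ), 0 < |s| → |s| < s₁ →
        ‖ζ - z ⟨0, hm⟩ s‖ = c₁ * |s| ^ ν →
        c₂ * |s| ^ μ ≤
          ‖(ζ - ζ₀) ^ m + ∑ k : Fin m, a k s * (ζ - ζ₀) ^ (m - (k.1 + 1))‖ := by
  have hm' : (1 : ℝ) ≤ (m : ℝ) := by exact_mod_cast hm
  refine ⟨ν₁ + 1, by linarith, c, hc, (c / 2) ^ m, by positivity,
    m * (ν₁ + 1) + 1, by nlinarith, min s₀ (1/2), by positivity, ?_⟩
  intro s ζ hs hs1 hcirc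
  have hs0 : |s| < s₀ := lt_of_lt_of_le hs1 (min_le_left _ _)
  have hshalf : |s| ≤ 1/2 := le_of_lt (lt_of_lt_of_le hs1 (min_le_right _ _))
  have hsle1 : |s| ≤ 1 := by linarith
  have hA : (0:ℝ) ≤ |s| ^ ν₁ := Real.rpow_nonneg (abs_nonneg s) _
  have hB : (0:ℝ) ≤ |s| ^ (ν₁ + 1) := Real.rpow_nonneg (abs_nonneg s) _
  have hBA : |s| ^ (ν₁ + 1) = |s| ^ ν₁ * |s| := by
    rw [Real.rpow_add hs, Real.rpow_one]
  have hfac : ∀ j : Fin m, c / 2 * |s| ^ (ν₁ + 1) ≤ ‖ζ - z j s‖ := by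
    intro j
    rcases hsep j with h | h
    · rw [h s hs0, hcirc]
      exact mul_le_mul_of_nonneg_right (by linarith) hB
    · have hsepj := h s hs hs0
      have tri : ‖z j s - z ⟨0, hm⟩ s‖ ≤
          ‖ζ - z j s‖ + ‖ζ - z ⟨0, hm⟩ s‖ := by
        have : z j s - z ⟨0, hm⟩ s = (ζ - z ⟨0, hm⟩ s) - (ζ - z j s) := by ring
        rw [this]
        calc ‖(ζ - z ⟨0, hm⟩ s) - (ζ - z j s)‖
            ≤ ‖ζ - z ⟨0, hm⟩ s‖ + ‖ζ - z j s‖ :=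
              norm_sub_le _ _
          _ = _ := by ring
      rw [hcirc, hBA] at tri
      have habs : 0 ≤ |s| := abs_nonneg s
      nlinarith [mul_le_mul_of_nonneg_left hshalf (mul_nonneg hc.le hA)]
  rw [hfact, norm_prod]
  have hprod : ∏ j : Fin m, (c / 2 * |s| ^ (ν₁ + 1)) ≤
      ∏ j : Fin m, ‖ζ - z j s‖ :=
    Finset.prod_le_prod (fun j _ => by positivity) (fun j _ => hfac j)
  refine le_trans ?_ hprod
  rw [Finset.prod_const, Finset.card_univ, Fintype.card_fin, mul_pow,
    ← Real.rpow_natCast (|s| ^ (ν₁ + 1)) m, ← Real.rpow_mul (abs_nonneg s)]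
  have hexp : |s| ^ (m * (ν₁ + 1) + 1) ≤ |s| ^ ((ν₁ + 1) * m) := by
    apply Real.rpow_le_rpow_of_exponent_ge hs hsle1
    nlinarith
  exact mul_le_mul_of_nonneg_left hexp (by positivity)
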